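/- Let q be a prime power, r ≥ 1 an integer, and consider the q-ary single parity-check code P = {x ∈ F_q^(r+1) : x_1 + x_2 + ... + x_{r+1} = 0}. Then for every 0 ≤ j ≤ r + 1, the number of codewords of P of Hamming weight exactly j equals C(r+1, j) · ((q−1)^j + (−1)^j · (q−1)) / q, where C(·,·) is the binomial coefficient. -/

import Mathlib

open Finset

private lemma countNZ (F : Type) [Field F] [Fintype F] [DecidableEq F] (n : ℕ) :
    (Finset.univ.filter (fun y : Fin n → F => ∀ i, y i ≠ 0)).card
      = (Fintype.card F - 1) ^ n := by
  rw [← Fintype.card_subtype,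
    Fintype.card_congr (Equiv.subtypePiEquivPi (p := fun _ : Fin n => fun x : F => x ≠ 0)),
    Fintype.card_pi]
  simp [Fintype.card_subtype_compl]

private def countA (F : Type) [Field F] [Fintype F] [DecidableEq F] (n : ℕ) : ℕ :=
  (Finset.univ.filter (fun y : Fin n → F => (∀ i, y i ≠ 0) ∧ ∑ i, y i = 0)).card

private lemma countA_zero (F : Type) [Field F] [Fintype F] [DecidableEq F] :
    countA F 0 = 1 := by
  unfold countA
  rw [Finset.filter_true_of_mem, Finset.card_univ]
  · simp
  · intro y _
    exact ⟨fun i => i.elim0, by simp⟩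

private lemma countA_succ (F : Type) [Field F] [Fintype F] [DecidableEq F] (n : ℕ) :
    countA F (n + 1) + countA F n = (Fintype.card F - 1) ^ n := by
  have h1 : countA F (n + 1) =
      (Finset.univ.filter (fun z : Fin n → F => (∀ i, z i ≠ 0) ∧ ∑ i, z i ≠ 0)).card := by
    apply Finset.card_nbij' (fun y => Fin.init y) (fun z => Fin.snoc z (-∑ i, z i))
    · intro y hy
      simp only [Finset.mem_coe, Finset.mem_filter, Finset.mem_univ, true_and] at hy ⊢
      have hsum : ∑ i, Fin.init y i = -(y (Fin.last n)) := by
        have := hy.2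
        rw [Fin.sum_univ_castSucc] at this
        have h2 : ∑ i : Fin n, y (Fin.castSucc i) = -(y (Fin.last n)) := by
          rw [eq_neg_iff_add_eq_zero]; exact this
        simpa [Fin.init] using h2
      refine ⟨fun i => hy.1 _, ?_⟩
      rw [hsum]
      exact neg_ne_zero.mpr (hy.1 _)
    · intro z hz
      simp only [Finset.mem_coe, Finset.mem_filter, Finset.mem_univ, true_and] at hz ⊢
      constructor
      · intro i
        refine Fin.lastCases ?_ ?_ i
        · rw [Fin.snoc_last]; exact neg_ne_zero.mpr hz.2
        · intro k; rw [Fin.snoc_castSucc]; exact hz.1 k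
      · rw [Fin.sum_univ_castSucc]
        simp [Fin.snoc_castSucc, Fin.snoc_last]
    · intro y hy
      simp only [Finset.mem_coe, Finset.mem_filter, Finset.mem_univ, true_and] at hy
      have hsum : -∑ i, Fin.init y i = y (Fin.last n) := by
        have := hy.2
        rw [Fin.sum_univ_castSucc] at this
        have h2 : ∑ i : Fin n, y (Fin.castSucc i) = -(y (Fin.last n)) := by
          rw [eq_neg_iff_add_eq_zero]; exact this
        simp [Fin.init, h2]
      beta_reduce
      rw [hsum]
      exact Fin.snoc_init_self y
    · intro z hz
      exact Fin.init_snoc _ _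
  rw [h1, ← countNZ F n]
  unfold countA
  rw [← Finset.filter_filter, ← Finset.filter_filter, add_comm,
    Finset.card_filter_add_card_filter_not]

private lemma countA_val (F : Type) [Field F] [Fintype F] [DecidableEq F] (n : ℕ) :
    (countA F n : ℚ) =
      (((Fintype.card F : ℚ) - 1) ^ n + (-1) ^ n * ((Fintype.card F : ℚ) - 1))
        / (Fintype.card F : ℚ) := by
  have hq1 : 1 ≤ Fintype.card F := Fintype.card_pos
  have hq0 : (Fintype.card F : ℚ) ≠ 0 := Nat.cast_ne_zero.mpr (by omega)
  induction n with
  | zero => rw [countA_zero]; push_cast; field_simp; ring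
  | succ n ih =>
    have h := countA_succ F n
    have h' : (countA F (n + 1) : ℚ) + countA F n = ((Fintype.card F : ℚ) - 1) ^ n := by
      have := congrArg (fun m : ℕ => (m : ℚ)) h
      push_cast [Nat.cast_sub hq1] at this
      exact this
    have : (countA F (n + 1) : ℚ) = ((Fintype.card F : ℚ) - 1) ^ n - countA F n := by
      linarith
    rw [this, ih]
    field_simp
    ring

private lemma fiber_count (F : Type) [Field F] [Fintype F] [DecidableEq F] {n j : ℕ}
    (S : Finset (Fin n)) (hS : S.card = j) :
    (Finset.univ.filter (fun x : Fin n → F =>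
        (∑ i, x i = 0) ∧ (Finset.univ.filter (fun i => x i ≠ 0)) = S)).card = countA F j := by
  have e : Fin j ≃o (S : Finset (Fin n)) := S.orderIsoOfFin hS
  unfold countA
  apply Finset.card_nbij' (fun x => fun k => x (e k))
    (fun y => fun i => if h : i ∈ S then y (e.symm ⟨i, h⟩) else 0)
  · intro x hx
    simp only [Finset.mem_coe, Finset.mem_filter, Finset.mem_univ, true_and] at hx ⊢
    obtain ⟨hsum, hsupp⟩ := hx
    constructor
    · intro k
      have hk : ((e k : S) : Fin n) ∈ Finset.univ.filter (fun i => x i ≠ 0) := by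
        rw [hsupp]; exact (e k).2
      exact (Finset.mem_filter.mp hk).2
    · have h1 : ∑ k : Fin j, x (e k) = ∑ s : S, x s := Equiv.sum_comp e.toEquiv (fun s : S => x s)
      rw [h1, Finset.sum_coe_sort]
      rw [Finset.sum_subset (Finset.subset_univ S)]
      · exact hsum
      · intro i _ hi
        by_contra hxi
        exact hi (hsupp ▸ Finset.mem_filter.mpr ⟨Finset.mem_univ i, hxi⟩)
  · intro y hy
    simp only [Finset.mem_coe, Finset.mem_filter, Finset.mem_univ, true_and] at hy ⊢
    obtain ⟨hnz, hsum⟩ := hy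
    have hval : ∀ s : S, (if h : (s : Fin n) ∈ S then y (e.symm ⟨s, h⟩) else 0)
        = y (e.symm s) := fun s => dif_pos s.2
    constructor
    · rw [← Finset.sum_subset (Finset.subset_univ S) (fun i _ hi => dif_neg hi),
        ← Finset.sum_coe_sort]
      calc ∑ s : S, (if h : (s : Fin n) ∈ S then y (e.symm ⟨s, h⟩) else 0)
          = ∑ s : S, y (e.symm s) := Finset.sum_congr rfl (fun s _ => hval s)
        _ = ∑ k, y k := Equiv.sum_comp e.symm.toEquiv (fun k => y k)
        _ = 0 := hsum
    · ext i
      simp only [Finset.mem_filter, Finset.mem_univ, true_and]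
      constructor
      · intro hi
        by_contra hiS
        rw [dif_neg hiS] at hi
        exact hi rfl
      · intro hiS
        rw [dif_pos hiS]
        exact hnz _
  · intro x hx
    simp only [Finset.mem_coe, Finset.mem_filter, Finset.mem_univ, true_and] at hx
    obtain ⟨_, hsupp⟩ := hx
    funext i
    by_cases h : i ∈ S
    · simp only [dif_pos h, OrderIso.apply_symm_apply]
    · beta_reduce
      rw [dif_neg h]
      by_contra hxi
      exact h (hsupp ▸ Finset.mem_filter.mpr ⟨Finset.mem_univ i, fun h0 => hxi h0.symm⟩)
  · intro y hy
    funext k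
    show (if h : ((e k : S) : Fin n) ∈ S then y (e.symm ⟨(e k : S), h⟩) else 0) = y k
    rw [dif_pos (e k).2]
    have h2 : (⟨((e k : S) : Fin n), (e k).2⟩ : S) = e k := rfl
    rw [h2, OrderIso.symm_apply_apply]

/-- Weight distribution of the `q`-ary single parity-check code of
length `r + 1` (over a finite field `F` of cardinality `q`): the number of codewords
of Hamming weight exactly `j` equals `C(r+1, j) · ((q-1)^j + (-1)^j (q-1)) / q`. -/
theorem stmt_9 (q r j : ℕ) (hr : 1 ≤ r) (hj : j ≤ r + 1)
    (F : Type) [Field F] [Fintype F] [DecidableEq F] (hq : Fintype.card F = q) :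
    ((Finset.univ.filter
        (fun x : Fin (r + 1) → F => (∑ i, x i) = 0 ∧ hammingNorm x = j)).card : ℚ)
      = ((r + 1).choose j : ℚ) *
          (((q : ℚ) - 1) ^ j + (-1) ^ j * ((q : ℚ) - 1)) / (q : ℚ) := by
  subst hq
  have hmem : ∀ x ∈ Finset.univ.filter
      (fun x : Fin (r + 1) → F => (∑ i, x i) = 0 ∧ hammingNorm x = j),
      (Finset.univ.filter (fun i => x i ≠ 0))
        ∈ Finset.powersetCard j (Finset.univ : Finset (Fin (r + 1))) := by
    intro x hx
    rw [Finset.mem_powersetCard_univ]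
    exact (Finset.mem_filter.mp hx).2.2
  rw [Finset.card_eq_sum_card_fiberwise hmem]
  have hfib : ∀ S ∈ Finset.powersetCard j (Finset.univ : Finset (Fin (r + 1))),
      ((Finset.univ.filter
          (fun x : Fin (r + 1) → F => (∑ i, x i) = 0 ∧ hammingNorm x = j)).filter
        (fun x => Finset.univ.filter (fun i => x i ≠ 0) = S)).card = countA F j := by
    intro S hS
    rw [Finset.mem_powersetCard_univ] at hS
    rw [Finset.filter_filter, ← fiber_count F S hS]
    congr 1
    apply Finset.filter_congr
    intro x _
    constructor
    · rintro ⟨⟨h1, _⟩, h2⟩; exact ⟨h1, h2⟩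
    · rintro ⟨h1, h2⟩
      refine ⟨⟨h1, ?_⟩, h2⟩
      show (Finset.univ.filter (fun i => x i ≠ 0)).card = j
      rw [h2, hS]
  rw [Finset.sum_congr rfl hfib, Finset.sum_const, smul_eq_mul,
    Finset.card_powersetCard, Finset.card_univ, Fintype.card_fin]
  push_cast
  rw [countA_val]
  ring
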